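/- With the purely imaginary parameter setting, the matrix B, and the vectors ξ_1,…,ξ_n of the context, for each j = 1,…,n one has B^{j+1}·ξ_j = 0 and B^j·ξ_j ≠ 0. -/

import Mathlib

open Complex Matrix Finset

noncomputable section

/-- Index type for `(n+1)×(n+1)` matrices: a `1`-block plus an `n`-block. -/
abbrev Idx (n : ℕ) := Fin 1 ⊕ Fin n

/-- `ζ = 2·Im(λ0)/(n+1)`. -/
def zeta (n : ℕ) (l0 : ℂ) : ℝ := 2 * l0.im / (n + 1)

/-- `ω_j = jπ/(n+1)`. -/
def om (n j : ℕ) : ℝ := j * Real.pi / (n + 1)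

/-- `a_j = ζ·csc(ω_j)` for `j = 1,…,n` (indexed by `j : Fin n` as `j+1`). -/
def aa (n : ℕ) (l0 : ℂ) (j : Fin n) : ℝ := zeta n l0 / Real.sin (om n ((j : ℕ) + 1))

/-- `b_j = ζ·cot(ω_j) − 2·Re(λ0)` for `j = 1,…,n`. -/
def bb (n : ℕ) (l0 : ℂ) (j : Fin n) : ℝ :=
  zeta n l0 * (Real.cos (om n ((j : ℕ) + 1)) / Real.sin (om n ((j : ℕ) + 1))) - 2 * l0.re

/-- `z0 = 2·Re(λ0) + i·ζ`. -/
def zz0 (n : ℕ) (l0 : ℂ) : ℂ := 2 * l0.re + Complex.I * zeta n l0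

/-- The `(n+1)×(n+1)` matrix `B` with `(1,1)` entry `i·n·ζ`, first row/column entries `a_j`,
diagonal entries `−(z0 + b_j)` and all other entries `0`. -/
def Bmat (n : ℕ) (l0 : ℂ) : Matrix (Idx n) (Idx n) ℂ :=
  Matrix.fromBlocks
    (Matrix.of fun _ _ => Complex.I * n * zeta n l0)
    (Matrix.of fun _ j => (aa n l0 j : ℂ))
    (Matrix.of fun i _ => (aa n l0 i : ℂ))
    (Matrix.diagonal fun j => -(zz0 n l0 + (bb n l0 j : ℂ)))

/-- The vector `ξ_m = (0, a_1/(iζ+b_1)^{m+1}, …, a_n/(iζ+b_n)^{m+1})ᵀ`. -/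
def xiv (n : ℕ) (l0 : ℂ) (m : ℕ) : Idx n → ℂ :=
  Sum.elim (fun _ => 0)
    (fun k : Fin n => (aa n l0 k : ℂ) / (Complex.I * zeta n l0 + (bb n l0 k : ℂ)) ^ (m + 1))

namespace S8

/-- `a_j` indexed by a natural number `j` (meaning `ζ/sin(ω_j)`). -/
def AN (n : ℕ) (l0 : ℂ) (j : ℕ) : ℝ := zeta n l0 / Real.sin (om n j)

/-- `c_j = iζ + b_j` indexed by natural `j`. -/
def CN (n : ℕ) (l0 : ℂ) (j : ℕ) : ℂ :=
  Complex.I * zeta n l0 +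
    ((zeta n l0 * (Real.cos (om n j) / Real.sin (om n j)) - 2 * l0.re : ℝ) : ℂ)

lemma aa_eq (n : ℕ) (l0 : ℂ) (k : Fin n) : aa n l0 k = AN n l0 ((k : ℕ) + 1) := rfl

lemma cc_eq (n : ℕ) (l0 : ℂ) (k : Fin n) :
    Complex.I * zeta n l0 + ((bb n l0 k : ℝ) : ℂ) = CN n l0 ((k : ℕ) + 1) := rfl

def qq (n j : ℕ) : ℂ := Complex.exp ((om n j : ℝ) * Complex.I)

def rr (n : ℕ) : ℂ := Complex.exp (2 * Real.pi * Complex.I / (n + 1))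

variable {n : ℕ} {l0 : ℂ}

lemma zeta_ne (him : l0.im ≠ 0) : zeta n l0 ≠ 0 := by
  unfold zeta
  have : ((n : ℝ) + 1) ≠ 0 := by positivity
  exact div_ne_zero (by simpa using him) this

lemma sin_om_pos {j : ℕ} (h1 : 1 ≤ j) (h2 : j ≤ n) : 0 < Real.sin (om n j) := by
  apply Real.sin_pos_of_pos_of_lt_pi
  · unfold om
    have : (0:ℝ) < j := by exact_mod_cast h1
    positivity
  · unfold om
    rw [div_lt_iff₀ (by positivity)]
    have hj : (j : ℝ) < (n : ℝ) + 1 := by exact_mod_cast Nat.lt_succ_of_le h2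
    nlinarith [Real.pi_pos]

lemma sin_om_ne {j : ℕ} (h1 : 1 ≤ j) (h2 : j ≤ n) : Real.sin (om n j) ≠ 0 :=
  (sin_om_pos h1 h2).ne'

lemma q_sq (j : ℕ) : qq n j ^ 2 = rr n ^ j := by
  rw [qq, rr, ← Complex.exp_nat_mul, ← Complex.exp_nat_mul]
  congr 1
  push_cast [om]
  ring

lemma rr_pow : rr n ^ (n + 1) = 1 := by
  rw [rr, ← Complex.exp_nat_mul]
  have hn1 : ((n : ℂ) + 1) ≠ 0 := by exact_mod_cast Nat.succ_ne_zero n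
  rw [show ((n + 1 : ℕ) : ℂ) * (2 * Real.pi * Complex.I / (n + 1)) = 2 * Real.pi * Complex.I by
    push_cast; field_simp]
  exact Complex.exp_two_pi_mul_I

lemma rr_pow_ne_one {j : ℕ} (h1 : 1 ≤ j) (h2 : j ≤ n) : rr n ^ j ≠ 1 := by
  rw [rr, ← Complex.exp_nat_mul]
  intro h
  rw [Complex.exp_eq_one_iff] at h
  obtain ⟨k, hk⟩ := h
  have h2pi : (2 * (Real.pi : ℂ) * Complex.I) ≠ 0 := by
    simp [Real.pi_ne_zero, Complex.I_ne_zero]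
  have hn1 : ((n : ℂ) + 1) ≠ 0 := by exact_mod_cast Nat.succ_ne_zero n
  have hj : (j : ℂ) = (k : ℂ) * ((n : ℂ) + 1) := by
    apply mul_right_cancel₀ h2pi
    field_simp at hk
    linear_combination (2 * (Real.pi : ℂ) * Complex.I) * hk
  have hjz : (j : ℤ) = k * ((n : ℤ) + 1) := by exact_mod_cast hj
  rcases le_or_gt k 0 with hk0 | hk0
  · have : (j : ℤ) ≤ 0 := by nlinarith
    omega
  · have : (1 : ℤ) ≤ k := hk0
    have : ((n : ℤ) + 1) ≤ j := by nlinarith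
    omega

lemma an_ne (him : l0.im ≠ 0) {j : ℕ} (h1 : 1 ≤ j) (h2 : j ≤ n) :
    ((AN n l0 j : ℝ) : ℂ) ≠ 0 := by
  rw [Complex.ofReal_ne_zero, AN]
  exact div_ne_zero (zeta_ne him) (sin_om_ne h1 h2)

lemma qq_ne (j : ℕ) : qq n j ≠ 0 := Complex.exp_ne_zero _

lemma cn_eq_mul (hre : l0.re = 0) {j : ℕ} (h1 : 1 ≤ j) (h2 : j ≤ n) :
    CN n l0 j = (AN n l0 j : ℂ) * qq n j := by
  have hs : Complex.sin ((om n j : ℝ) : ℂ) ≠ 0 := by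
    rw [← Complex.ofReal_sin, Complex.ofReal_ne_zero]; exact sin_om_ne h1 h2
  rw [CN, AN, qq, Complex.exp_mul_I, hre]
  push_cast
  field_simp
  ring

lemma cn_ne (hre : l0.re = 0) (him : l0.im ≠ 0) {j : ℕ} (h1 : 1 ≤ j) (h2 : j ≤ n) :
    CN n l0 j ≠ 0 := by
  rw [cn_eq_mul hre h1 h2]
  exact mul_ne_zero (an_ne him h1 h2) (qq_ne j)

lemma an_mul (him : l0.im ≠ 0) {j : ℕ} (h1 : 1 ≤ j) (h2 : j ≤ n) :
    (AN n l0 j : ℂ) * (qq n j ^ 2 - 1) = 2 * Complex.I * (zeta n l0 : ℂ) * qq n j := by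
  have hs : Complex.sin ((om n j : ℝ) : ℂ) ≠ 0 := by
    rw [← Complex.ofReal_sin, Complex.ofReal_ne_zero]; exact sin_om_ne h1 h2
  have A : (AN n l0 j : ℂ) * Complex.sin ((om n j : ℝ) : ℂ) = (zeta n l0 : ℂ) := by
    rw [AN]; push_cast; exact div_mul_cancel₀ _ hs
  have E : Complex.exp ((om n j : ℝ) * Complex.I) * Complex.exp (-(om n j : ℝ) * Complex.I)
      = 1 := by
    rw [← Complex.exp_add]
    norm_num
  have S : 2 * Complex.sin ((om n j : ℝ) : ℂ)
      = (Complex.exp (-(om n j : ℝ) * Complex.I) - Complex.exp ((om n j : ℝ) * Complex.I))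
        * Complex.I := Complex.two_sin _
  have hI : Complex.I * Complex.I = -1 := Complex.I_mul_I
  rw [qq]
  set e1 := Complex.exp ((om n j : ℝ) * Complex.I)
  set e2 := Complex.exp (-(om n j : ℝ) * Complex.I)
  set a := ((AN n l0 j : ℝ) : ℂ)
  linear_combination (2 * Complex.I * e1) * A - (Complex.I * e1 * a) * S + a * E
    - (e1 * a * (e2 - e1)) * hI

lemma geom_zero {w : ℂ} (hw : w ≠ 1) (hpow : w ^ (n + 1) = 1) :
    ∑ i ∈ range (n + 1), w ^ i = 0 := by
  rw [geom_sum_eq hw, hpow]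
  simp

lemma geom_neg_one {w : ℂ} (hw : w ≠ 1) (hpow : w ^ (n + 1) = 1) :
    ∑ i ∈ range n, w ^ (i + 1) = -1 := by
  have h := Finset.sum_range_succ' (fun i => w ^ i) n
  rw [geom_zero hw hpow] at h
  simp only [pow_zero] at h
  linear_combination -h

lemma sum_inv_rr (hn : 1 ≤ n) :
    ∑ k ∈ range n, ((rr n) ^ (k + 1) - 1)⁻¹ = -((n : ℂ) / 2) := by
  set f : ℕ → ℂ := fun k => ((rr n) ^ (k + 1) - 1)⁻¹ with hf
  have hrefl := Finset.sum_range_reflect f n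
  have key : ∀ k ∈ range n, f (n - 1 - k) + f k = -1 := by
    intro k hk
    rw [mem_range] at hk
    have e1 : n - 1 - k + 1 = n - k := by omega
    have hu : (rr n) ^ (n - k) ≠ 1 := rr_pow_ne_one (by omega) (by omega)
    have hw : (rr n) ^ (k + 1) ≠ 1 := rr_pow_ne_one (by omega) (by omega)
    have huw : (rr n) ^ (n - k) * (rr n) ^ (k + 1) = 1 := by
      rw [← pow_add, show n - k + (k + 1) = n + 1 by omega, rr_pow]
    have hu' : (rr n) ^ (n - k) - 1 ≠ 0 := sub_ne_zero.mpr hu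
    have hw' : (rr n) ^ (k + 1) - 1 ≠ 0 := sub_ne_zero.mpr hw
    rw [hf]
    simp only [e1]
    field_simp
    linear_combination huw
  have h2 : ∑ k ∈ range n, (f (n - 1 - k) + f k) = -(n : ℂ) := by
    rw [sum_congr rfl key]
    simp
  have h3 : (∑ k ∈ range n, f k) + (∑ k ∈ range n, f k)
      = ∑ k ∈ range n, (f (n - 1 - k) + f k) := by
    rw [sum_add_distrib, hrefl]
  linear_combination (h3.trans h2) / 2

lemma sum0 (hre : l0.re = 0) (him : l0.im ≠ 0) (hn : 1 ≤ n) :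
    ∑ k ∈ range n, (AN n l0 (k + 1) : ℂ) ^ 2 / CN n l0 (k + 1) ^ 1
      = -(Complex.I * n * zeta n l0) := by
  have hterm : ∀ k ∈ range n, (AN n l0 (k + 1) : ℂ) ^ 2 / CN n l0 (k + 1) ^ 1
      = (2 * Complex.I * (zeta n l0 : ℂ)) * ((rr n) ^ (k + 1) - 1)⁻¹ := by
    intro k hk
    rw [mem_range] at hk
    have h1 : 1 ≤ k + 1 := by omega
    have h2 : k + 1 ≤ n := by omega
    have ha := an_ne (n := n) him h1 h2
    have hq := qq_ne (n := n) (k + 1)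
    have hcm := cn_eq_mul hre h1 h2
    have ham := an_mul him h1 h2
    have hr1 : (rr n) ^ (k + 1) - 1 ≠ 0 := sub_ne_zero.mpr (rr_pow_ne_one h1 h2)
    rw [pow_one, hcm, ← q_sq]
    have hq1 : qq n (k + 1) ^ 2 - 1 ≠ 0 := by rw [q_sq]; exact hr1
    field_simp
    linear_combination ham
  rw [sum_congr rfl hterm, ← mul_sum, sum_inv_rr hn]
  push_cast
  ring

lemma sum1 (hre : l0.re = 0) (him : l0.im ≠ 0) (hn : 1 ≤ n) :
    ∑ k ∈ range n, (AN n l0 (k + 1) : ℂ) ^ 2 / CN n l0 (k + 1) ^ 2 = -1 := by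
  have hterm : ∀ k ∈ range n, (AN n l0 (k + 1) : ℂ) ^ 2 / CN n l0 (k + 1) ^ 2
      = ((rr n) ^ n) ^ (k + 1) := by
    intro k hk
    rw [mem_range] at hk
    have h1 : 1 ≤ k + 1 := by omega
    have h2 : k + 1 ≤ n := by omega
    have hcm := cn_eq_mul hre h1 h2
    have hc0 : CN n l0 (k + 1) ≠ 0 := cn_ne hre him h1 h2
    have hone : ((rr n) ^ n) ^ (k + 1) * (rr n) ^ (k + 1) = 1 := by
      rw [← mul_pow, ← pow_succ, rr_pow, one_pow]
    have hq2 := q_sq (n := n) (k + 1)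
    rw [div_eq_iff (pow_ne_zero 2 hc0), hcm]
    linear_combination (-(AN n l0 (k + 1) : ℂ) ^ 2) * hone
      - (((rr n) ^ n) ^ (k + 1) * (AN n l0 (k + 1) : ℂ) ^ 2) * hq2
  rw [sum_congr rfl hterm]
  exact geom_neg_one (rr_pow_ne_one hn le_rfl)
    (by rw [← pow_mul, mul_comm, pow_mul, rr_pow, one_pow])

lemma sum_poly (hn : 1 ≤ n) {m : ℕ} (hm2 : 2 ≤ m) (hmn : m ≤ n) :
    ∑ k ∈ range n, ((rr n) ^ (k + 1) - 1) ^ (m - 1) * ((rr n) ^ (k + 1)) ^ (n + 1 - m)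
      = 0 := by
  have hfull : ∑ k ∈ range (n + 1), ((rr n) ^ k - 1) ^ (m - 1) * ((rr n) ^ k) ^ (n + 1 - m)
      = 0 := by
    have expand : ∀ k ∈ range (n + 1),
        ((rr n) ^ k - 1) ^ (m - 1) * ((rr n) ^ k) ^ (n + 1 - m)
        = ∑ t ∈ range (m - 1 + 1),
            ((-1 : ℂ) ^ (t + (m - 1)) * ((rr n) ^ k) ^ t * 1 ^ (m - 1 - t)
              * ((m - 1).choose t)) * ((rr n) ^ k) ^ (n + 1 - m) := by
      intro k _
      rw [sub_pow, sum_mul]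
    rw [sum_congr rfl expand, sum_comm]
    apply sum_eq_zero
    intro t ht
    rw [mem_range] at ht
    have h1 : 1 ≤ t + (n + 1 - m) := by omega
    have h2 : t + (n + 1 - m) ≤ n := by omega
    have hterm : ∀ k ∈ range (n + 1),
        ((-1 : ℂ) ^ (t + (m - 1)) * ((rr n) ^ k) ^ t * 1 ^ (m - 1 - t)
          * ((m - 1).choose t)) * ((rr n) ^ k) ^ (n + 1 - m)
        = ((-1 : ℂ) ^ (t + (m - 1)) * ((m - 1).choose t))
            * ((rr n) ^ (t + (n + 1 - m))) ^ k := by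
      intro k _
      have hp : ((rr n) ^ k) ^ t * ((rr n) ^ k) ^ (n + 1 - m)
          = ((rr n) ^ (t + (n + 1 - m))) ^ k := by
        rw [← pow_add, ← pow_mul, mul_comm, pow_mul]
      rw [one_pow, ← hp]
      ring
    rw [sum_congr rfl hterm, ← mul_sum,
      geom_zero (rr_pow_ne_one h1 h2)
        (by rw [← pow_mul, mul_comm, pow_mul, rr_pow, one_pow]),
      mul_zero]
  have hsucc := Finset.sum_range_succ'
    (fun k => ((rr n) ^ k - 1) ^ (m - 1) * ((rr n) ^ k) ^ (n + 1 - m)) n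
  rw [hfull] at hsucc
  simp only [pow_zero, sub_self, zero_pow (show m - 1 ≠ 0 by omega), zero_mul,
    add_zero] at hsucc
  exact hsucc.symm

lemma alg (a q Z : ℂ) {m : ℕ} (hm1 : 1 ≤ m) (hmn : m ≤ n)
    (ham : a * (q ^ 2 - 1) = Z * q) (hw : (q ^ 2) ^ (n + 1) = 1) :
    (q ^ 2 - 1) ^ (m - 1) * (q ^ 2) ^ (n + 1 - m) * (a * q) ^ (m + 1)
      = a ^ 2 * Z ^ (m - 1) := by
  have h1 : (a * q) ^ (m + 1) = a ^ 2 * a ^ (m - 1) * q ^ (m + 1) := by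
    rw [mul_pow, show m + 1 = 2 + (m - 1) by omega, pow_add]
  have h2 : (q ^ 2 - 1) ^ (m - 1) * a ^ (m - 1) = Z ^ (m - 1) * q ^ (m - 1) := by
    rw [← mul_pow, show (q ^ 2 - 1) * a = Z * q from by linear_combination ham, mul_pow]
  have h3 : q ^ (m - 1) * q ^ (m + 1) = (q ^ 2) ^ m := by
    rw [← pow_add, ← pow_mul]
    congr 1
    omega
  have h4 : (q ^ 2) ^ m * (q ^ 2) ^ (n + 1 - m) = 1 := by
    rw [← pow_add, show m + (n + 1 - m) = n + 1 by omega, hw]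
  calc (q ^ 2 - 1) ^ (m - 1) * (q ^ 2) ^ (n + 1 - m) * (a * q) ^ (m + 1)
      = a ^ 2 * ((q ^ 2 - 1) ^ (m - 1) * a ^ (m - 1)) * ((q ^ 2) ^ (n + 1 - m) * q ^ (m + 1)) := by
        rw [h1]; ring
    _ = a ^ 2 * (Z ^ (m - 1) * q ^ (m - 1)) * ((q ^ 2) ^ (n + 1 - m) * q ^ (m + 1)) := by
        rw [h2]
    _ = a ^ 2 * Z ^ (m - 1) * (q ^ (m - 1) * q ^ (m + 1) * (q ^ 2) ^ (n + 1 - m)) := by ring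
    _ = a ^ 2 * Z ^ (m - 1) * ((q ^ 2) ^ m * (q ^ 2) ^ (n + 1 - m)) := by rw [h3]
    _ = a ^ 2 * Z ^ (m - 1) := by rw [h4, mul_one]

lemma sum_m (hre : l0.re = 0) (him : l0.im ≠ 0) (hn : 1 ≤ n) {m : ℕ}
    (hm2 : 2 ≤ m) (hmn : m ≤ n) :
    ∑ k ∈ range n, (AN n l0 (k + 1) : ℂ) ^ 2 / CN n l0 (k + 1) ^ (m + 1) = 0 := by
  have hz2 : (2 * Complex.I * (zeta n l0 : ℂ)) ≠ 0 := by
    have := zeta_ne (n := n) him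
    simp [Complex.I_ne_zero, this]
  have hterm : ∀ k ∈ range n, (AN n l0 (k + 1) : ℂ) ^ 2 / CN n l0 (k + 1) ^ (m + 1)
      = (((rr n) ^ (k + 1) - 1) ^ (m - 1) * ((rr n) ^ (k + 1)) ^ (n + 1 - m))
          / (2 * Complex.I * (zeta n l0 : ℂ)) ^ (m - 1) := by
    intro k hk
    rw [mem_range] at hk
    have h1 : 1 ≤ k + 1 := by omega
    have h2 : k + 1 ≤ n := by omega
    have hcm := cn_eq_mul hre h1 h2
    have hc0 : CN n l0 (k + 1) ≠ 0 := cn_ne hre him h1 h2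
    have ham := an_mul him h1 h2
    have hw : (qq n (k + 1) ^ 2) ^ (n + 1) = 1 := by
      rw [q_sq, ← pow_mul, mul_comm, pow_mul, rr_pow, one_pow]
    have halg := alg (n := n) (AN n l0 (k + 1) : ℂ) (qq n (k + 1))
      (2 * Complex.I * (zeta n l0 : ℂ)) (by omega) hmn ham hw
    rw [div_eq_div_iff (pow_ne_zero _ hc0) (pow_ne_zero _ hz2), hcm, ← q_sq]
    linear_combination -halg
  rw [sum_congr rfl hterm, ← sum_div, sum_poly hn hm2 hmn, zero_div]

def E0 (n : ℕ) : Idx n → ℂ := Sum.elim (fun _ => 1) (fun _ => 0)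

lemma zz0_eq (hre : l0.re = 0) : zz0 n l0 = Complex.I * zeta n l0 := by
  rw [zz0, hre]
  simp

lemma mulVec_xiv (hre : l0.re = 0) (him : l0.im ≠ 0) (m : ℕ) :
    (Bmat n l0) *ᵥ (xiv n l0 m) =
      Sum.elim
        (fun _ => ∑ k ∈ range n, (AN n l0 (k + 1) : ℂ) ^ 2 / CN n l0 (k + 1) ^ (m + 1))
        (fun k : Fin n => -((AN n l0 ((k : ℕ) + 1) : ℂ) / CN n l0 ((k : ℕ) + 1) ^ m)) := by
  rw [Bmat, xiv, fromBlocks_mulVec]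
  funext i
  cases i with
  | inl i =>
    simp only [Sum.elim_inl, Sum.elim_inr, Pi.add_apply, mulVec, dotProduct,
      Function.comp, Matrix.of_apply, mul_zero, sum_const_zero, zero_add]
    rw [← Fin.sum_univ_eq_sum_range
      (fun k => (AN n l0 (k + 1) : ℂ) ^ 2 / CN n l0 (k + 1) ^ (m + 1)) n]
    apply Finset.sum_congr rfl
    intro k _
    rw [aa_eq, cc_eq]
    ring
  | inr k =>
    simp only [Sum.elim_inr, Sum.elim_inl, Pi.add_apply, mulVec, dotProduct,
      Matrix.of_apply, mul_zero, sum_const_zero, zero_add, Matrix.diagonal_apply,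
      ite_mul, zero_mul, Finset.sum_ite_eq, mem_univ, if_true]
    simp only [Function.comp_apply, Sum.elim_inl, Sum.elim_inr, mul_zero,
      sum_const_zero, zero_add]
    rw [zz0_eq hre, aa_eq, cc_eq]
    have hc0 : CN n l0 ((k : ℕ) + 1) ≠ 0 :=
      cn_ne hre him (Nat.le_add_left 1 _) (by omega)
    rw [pow_succ]
    field_simp
  
lemma mulVec_E0 : (Bmat n l0) *ᵥ (E0 n) =
    Sum.elim (fun _ => Complex.I * n * zeta n l0)
      (fun k : Fin n => (AN n l0 ((k : ℕ) + 1) : ℂ)) := by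
  rw [Bmat, E0, fromBlocks_mulVec]
  funext i
  cases i with
  | inl i =>
    simp [mulVec, dotProduct, Function.comp]
  | inr k =>
    simp [mulVec, dotProduct, Function.comp, mulVec_diagonal, aa_eq]

lemma Bkill (hre : l0.re = 0) (him : l0.im ≠ 0) (hn : 1 ≤ n) :
    (Bmat n l0) *ᵥ (E0 n + xiv n l0 0) = 0 := by
  rw [mulVec_add, mulVec_E0, mulVec_xiv hre him 0]
  funext i
  cases i with
  | inl i =>
    have h0 := sum0 (n := n) hre him hn
    simp only [Pi.add_apply, Sum.elim_inl, Pi.zero_apply]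
    rw [show (0 : ℕ) + 1 = 1 from rfl, h0]
    ring
  | inr k =>
    simp only [Pi.add_apply, Sum.elim_inr, Pi.zero_apply, pow_zero, div_one]
    ring

lemma BX1 (hre : l0.re = 0) (him : l0.im ≠ 0) (hn : 1 ≤ n) :
    (Bmat n l0) *ᵥ (xiv n l0 1) = -(E0 n + xiv n l0 0) := by
  rw [mulVec_xiv hre him 1]
  funext i
  cases i with
  | inl i =>
    have h1 := sum1 (n := n) hre him hn
    simp only [Sum.elim_inl, Pi.neg_apply, Pi.add_apply, E0]
    rw [show (1 : ℕ) + 1 = 2 from rfl, h1]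
    simp [xiv]
  | inr k =>
    simp only [Sum.elim_inr, Pi.neg_apply, Pi.add_apply, E0, xiv, cc_eq, aa_eq]
    norm_num

lemma BXm (hre : l0.re = 0) (him : l0.im ≠ 0) (hn : 1 ≤ n) {m : ℕ}
    (hm2 : 2 ≤ m) (hmn : m ≤ n) :
    (Bmat n l0) *ᵥ (xiv n l0 m) = -(xiv n l0 (m - 1)) := by
  rw [mulVec_xiv hre him m]
  funext i
  cases i with
  | inl i =>
    have hs := sum_m (n := n) hre him hn hm2 hmn
    simp only [Sum.elim_inl, Pi.neg_apply, xiv, hs]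
    simp
  | inr k =>
    simp only [Sum.elim_inr, Pi.neg_apply, xiv, cc_eq, aa_eq]
    rw [show m - 1 + 1 = m by omega]

lemma main_pow (hre : l0.re = 0) (him : l0.im ≠ 0) (hn : 1 ≤ n) :
    ∀ j : ℕ, 1 ≤ j → j ≤ n →
      ((Bmat n l0) ^ j) *ᵥ (xiv n l0 j) = ((-1 : ℂ) ^ j) • (E0 n + xiv n l0 0) := by
  intro j
  induction j with
  | zero => omega
  | succ j ih =>
    intro _ hjn
    rcases Nat.eq_zero_or_pos j with rfl | hj
    · rw [pow_one, BX1 hre him hn, pow_one, neg_one_smul]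
    · have h2 : 2 ≤ j + 1 := by omega
      rw [pow_succ, ← mulVec_mulVec, BXm hre him hn h2 hjn]
      simp only [Nat.add_sub_cancel]
      rw [mulVec_neg, ih hj (by omega), pow_succ]
      funext i
      simp only [Pi.neg_apply, Pi.smul_apply, smul_eq_mul]
      ring

end S8

/-- with the purely imaginary parameter setting, for each `j = 1,…,n`,
`B^{j+1}·ξ_j = 0` and `B^j·ξ_j ≠ 0`. -/
theorem stmt8 (n : ℕ) (hn : 1 ≤ n) (l0 : ℂ) (hre : l0.re = 0) (him : l0.im ≠ 0) :
    ∀ j : ℕ, 1 ≤ j → j ≤ n →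
      ((Bmat n l0) ^ (j + 1)).mulVec (xiv n l0 j) = 0 ∧
      ((Bmat n l0) ^ j).mulVec (xiv n l0 j) ≠ 0 := by
  intro j hj1 hjn
  have hmain := S8.main_pow hre him hn j hj1 hjn
  constructor
  · rw [pow_succ', ← Matrix.mulVec_mulVec, hmain, Matrix.mulVec_smul,
      S8.Bkill hre him hn, smul_zero]
  · rw [hmain]
    intro h
    have hc := congrFun h (Sum.inl 0)
    simp only [Pi.smul_apply, Pi.add_apply, S8.E0, xiv, Sum.elim_inl, Pi.zero_apply,
      smul_eq_mul, add_zero, mul_one] at hc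
    exact pow_ne_zero j (by norm_num : (-1 : ℂ) ≠ 0) hc


end
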